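/- Let H be a Hilbert space, M an orthogonal projection on H, y in the range of M, and Φ : H → H an L-Lipschitz map with 0 < L < 1. Then the operator T(x) = (I − M)(Φ(x)) + y has a unique fixed point x*, every point of the iteration x_{k+1} = T(x_k) lies in C = {x : M x = y} for k ≥ 1, and ‖x_k − x*‖ ≤ L^k/(1 − L) · ‖x_1 − x_0‖ for all k ≥ 1. -/
import Mathlib


open scoped RealInnerProductSpace

theorem deq_pocs_linear_rate
    {H : Type*} [NormedAddCommGroup H] [InnerProductSpace ℝ H] [CompleteSpace H]
    (M : H →L[ℝ] H) (hMidem : ∀ x, M (M x) = M x)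
    (hMsa : ∀ x z : H, ⟪M x, z⟫ = ⟪x, M z⟫)
    (y : H) (hy : M y = y)
    (L : ℝ) (hL0 : 0 < L) (hL1 : L < 1)
    (Φ : H → H) (hΦ : ∀ x x', ‖Φ x - Φ x'‖ ≤ L * ‖x - x'‖)
    (T : H → H) (hT : ∀ x, T x = Φ x - M (Φ x) + y) :
    ∃ xs : H, T xs = xs ∧ (∀ z : H, T z = z → z = xs) ∧
      ∀ x₀ : H,
        (∀ k : ℕ, 1 ≤ k → M (T^[k] x₀) = y) ∧
        (∀ k : ℕ, 1 ≤ k →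
          ‖T^[k] x₀ - xs‖ ≤ L ^ k / (1 - L) * ‖T x₀ - x₀‖) := by
  have hproj : ∀ v : H, ‖v - M v‖ ≤ ‖v‖ := by
    intro v
    have horth : ⟪M v, v - M v⟫ = 0 := by
      rw [hMsa]
      have : M (v - M v) = 0 := by simp [map_sub, hMidem]
      rw [this, inner_zero_right]
    have hsq : ‖v‖ ^ 2 = ‖M v‖ ^ 2 + ‖v - M v‖ ^ 2 := by
      have h := norm_add_sq_real (M v) (v - M v)
      simp only [horth] at h
      have : M v + (v - M v) = v := by abel
      rw [this] at h
      linarith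
    nlinarith [norm_nonneg (M v), norm_nonneg (v - M v), norm_nonneg v]
  have hlipT : ∀ x x', ‖T x - T x'‖ ≤ L * ‖x - x'‖ := by
    intro x x'
    have : T x - T x' = (Φ x - Φ x') - M (Φ x - Φ x') := by
      rw [hT, hT, map_sub]; abel
    rw [this]
    exact le_trans (hproj _) (hΦ x x')
  set K : NNReal := ⟨L, hL0.le⟩ with hK
  have hKL : (K : ℝ) = L := rfl
  have hC : ContractingWith K T := by
    constructor
    · exact_mod_cast hL1
    · refine LipschitzWith.of_dist_le_mul fun x x' => ?_
      rw [dist_eq_norm, dist_eq_norm, hKL]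
      exact hlipT x x'
  haveI : Nonempty H := ⟨0⟩
  refine ⟨hC.fixedPoint T, hC.fixedPoint_isFixedPt, fun z hz => hC.fixedPoint_unique hz,
    fun x₀ => ⟨?_, ?_⟩⟩
  · intro k hk
    cases k with
    | zero => omega
    | succ m =>
      rw [Function.iterate_succ_apply', hT, map_add, map_sub, hMidem, hy]
      abel
  · intro k hk
    have h := hC.apriori_dist_iterate_fixedPoint_le x₀ k
    rw [dist_eq_norm, dist_eq_norm] at h
    have h1L : 0 < 1 - L := by linarith
    calc ‖T^[k] x₀ - hC.fixedPoint T‖ ≤ ‖x₀ - T x₀‖ * (K : ℝ) ^ k / (1 - K) := h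
      _ = L ^ k / (1 - L) * ‖T x₀ - x₀‖ := by
          rw [hKL, norm_sub_rev]; ring
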